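/- Let m₁ = m^{a₁,b₁,c₁} and m₂ = m^{a₂,b₂,c₂} be two quasi-Speh multisegments with defining segments Δ_{k₁} ≺ ⋯ ≺ Δ₁ and Δ'_{k₂} ≺ ⋯ ≺ Δ'₁ respectively, and suppose (a₂,b₂) ⪯ (a₁,b₁) in the total preorder (a₂+b₂ < a₁+b₁, or a₂+b₂ = a₁+b₁ and a₂ ≤ a₁). Define X = {(i,j) : Δᵢ ≺ Δ'ⱼ} and Y = {(i,j) : Δᵢ ≺ →Δ'ⱼ}, where →[α,β] = [α+1,β+1], and say (i₁,j₁) ↔ (i₂,j₂) if either (i₁ = i₂ and j₂ = j₁+1) or (j₁ = j₂ and i₂ = i₁-1). Then there exists an injective function f : X → Y with x ↔ f(x) for all x ∈ X. -/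
import Mathlib


/-- `[α₁,β₁] ≺ [α₂,β₂]` iff `α₁ ≤ α₂ - 1 ≤ β₁ < β₂` with integer differences. -/
def QSegPrec (Δ₁ Δ₂ : ℚ × ℚ) : Prop :=
  Δ₁.1 ≤ Δ₂.1 - 1 ∧ Δ₂.1 - 1 ≤ Δ₁.2 ∧ Δ₁.2 < Δ₂.2 ∧ ∃ n : ℤ, Δ₂.1 - Δ₁.1 = (n : ℚ)

/-- The `i`-th defining segment of the quasi-Speh multisegment `m^{a,b,c}`. -/
def quasiSpehSeg (a b c i : ℤ) : ℚ × ℚ :=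
  if i = 1 then (((b : ℚ) + a) / 2 - c, ((b : ℚ) + a) / 2 - 1)
  else (((b : ℚ) - a) / 2 + 1 - i, ((b : ℚ) + a) / 2 - i)

/-- The shift `→[α,β] = [α+1,β+1]`. -/
def shiftSeg (Δ : ℚ × ℚ) : ℚ × ℚ := (Δ.1 + 1, Δ.2 + 1)

/-- The edge relation of the Lapid–Mínguez bipartite graph. -/
def LMEdge (p q : ℤ × ℤ) : Prop :=
  (p.1 = q.1 ∧ q.2 = p.2 + 1) ∨ (p.2 = q.2 ∧ q.1 = p.1 - 1)

lemma quasiSpeh_key (a₁ b₁ c₁ a₂ b₂ c₂ i j : ℤ)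
    (ha₁ : 0 < a₁) (hb₁ : 0 < b₁) (hc₁0 : 0 ≤ c₁) (hc₁a : c₁ ≤ a₁)
    (ha₂ : 0 < a₂) (hb₂ : 0 < b₂) (hc₂0 : 0 ≤ c₂) (hc₂a : c₂ ≤ a₂)
    (hord : a₂ + b₂ < a₁ + b₁ ∨ (a₂ + b₂ = a₁ + b₁ ∧ a₂ ≤ a₁))
    (h1 : 1 ≤ i) (h2 : i ≤ b₁) (h3 : 1 ≤ j) (h4 : j ≤ b₂)
    (h5 : QSegPrec (quasiSpehSeg a₁ b₁ c₁ i) (quasiSpehSeg a₂ b₂ c₂ j))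
    (q : ℤ × ℤ) (hq : q = if i = j + 1 ∧ c₁ < c₂ then (i, j + 1) else (i - 1, j)) :
    (1 ≤ q.1 ∧ q.1 ≤ b₁ ∧ 1 ≤ q.2 ∧ q.2 ≤ b₂ ∧
      QSegPrec (quasiSpehSeg a₁ b₁ c₁ q.1) (shiftSeg (quasiSpehSeg a₂ b₂ c₂ q.2))) ∧
    LMEdge (i, j) q := by
  have hordZ : a₂ + b₂ ≤ a₁ + b₁ := by omega
  have hordQ : (a₂ : ℚ) + b₂ ≤ (a₁ : ℚ) + b₁ := by exact_mod_cast hordZ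
  have hjQ : (1 : ℚ) ≤ (j : ℚ) := by exact_mod_cast h3
  have hi1 : i ≠ 1 := by
    rintro rfl
    obtain ⟨-, -, h5c, -⟩ := h5
    by_cases hj : j = 1
    · subst hj
      norm_num [quasiSpehSeg] at h5c
      linarith
    · norm_num [quasiSpehSeg, hj] at h5c
      linarith
  have hi2 : 2 ≤ i := by omega
  by_cases hj : j = 1
  · -- j = 1 : the second segment is the special one
    subst hj
    simp only [QSegPrec, quasiSpehSeg, if_neg hi1, if_pos (rfl : (1:ℤ) = 1), if_true] at h5
    obtain ⟨h5a, h5b, h5c, n, hn⟩ := h5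
    have E1 : b₁ - a₁ + 2 - 2*i ≤ b₂ + a₂ - 2*c₂ := by
      have h : ((b₁ - a₁ + 2 - 2*i : ℤ) : ℚ) ≤ ((b₂ + a₂ - 2*c₂ : ℤ) : ℚ) := by
        push_cast; linarith
      exact_mod_cast h
    have E2 : b₂ + a₂ - 2*c₂ - 2 ≤ b₁ + a₁ - 2*i := by
      have h : ((b₂ + a₂ - 2*c₂ - 2 : ℤ) : ℚ) ≤ ((b₁ + a₁ - 2*i : ℤ) : ℚ) := by
        push_cast; linarith
      exact_mod_cast h
    have E3 : b₁ + a₁ - 2*i < b₂ + a₂ - 2 := by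
      have h : ((b₁ + a₁ - 2*i : ℤ) : ℚ) < ((b₂ + a₂ - 2 : ℤ) : ℚ) := by
        push_cast; linarith
      exact_mod_cast h
    have E4 : b₂ + a₂ - 2*c₂ - (b₁ - a₁ + 2 - 2*i) = 2*n := by
      have h : ((b₂ + a₂ - 2*c₂ - (b₁ - a₁ + 2 - 2*i) : ℤ) : ℚ) = ((2*n : ℤ) : ℚ) := by
        push_cast; linarith
      exact_mod_cast h
    by_cases hP : i = 1 + 1 ∧ c₁ < c₂
    · -- corner case: map (2,1) ↦ (2,2)
      obtain ⟨hij, hcc⟩ := hP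
      have hi2' : i = 2 := by omega
      subst hi2'
      have hsum : a₁ + b₁ = a₂ + b₂ := by omega
      have ha21 : a₂ ≤ a₁ := by omega
      have hc21 : 1 ≤ c₂ := by omega
      have hb2 : 2 ≤ b₂ := by omega
      rw [hq, if_pos ⟨hij, hcc⟩]
      have hsumQ : (a₁ : ℚ) + b₁ = (a₂ : ℚ) + b₂ := by exact_mod_cast hsum
      have ha21Q : (a₂ : ℚ) ≤ a₁ := by exact_mod_cast ha21
      have ha2Q : (1 : ℚ) ≤ a₂ := by exact_mod_cast ha₂
      refine ⟨⟨by norm_num, by omega, by norm_num, by omega, ?_⟩, Or.inl ⟨rfl, rfl⟩⟩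
      norm_num [QSegPrec, quasiSpehSeg, shiftSeg]
      refine ⟨by linarith, by linarith, by linarith, ⟨n + (c₂ - a₂), ?_⟩⟩
      push_cast
      linarith
    · -- map (i,1) ↦ (i-1,1)
      rw [hq, if_neg hP]
      by_cases hi3 : 3 ≤ i
      · have hi11 : i - 1 ≠ 1 := by omega
        refine ⟨⟨by omega, by omega, by omega, by omega, ?_⟩, Or.inr ⟨rfl, rfl⟩⟩
        norm_num [QSegPrec, quasiSpehSeg, shiftSeg, hi11]
        refine ⟨by push_cast; linarith, by push_cast; linarith, by push_cast; linarith,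
          ⟨n, ?_⟩⟩
        push_cast
        linarith
      · -- i = 2, c₂ ≤ c₁ : map (2,1) ↦ (1,1)
        have hi2' : i = 2 := by omega
        have hcc : c₂ ≤ c₁ := by
          by_contra h
          exact hP ⟨by omega, by omega⟩
        subst hi2'
        have hsum : a₁ + b₁ = a₂ + b₂ := by omega
        have hc21 : 1 ≤ c₂ := by omega
        have hsumQ : (a₁ : ℚ) + b₁ = (a₂ : ℚ) + b₂ := by exact_mod_cast hsum
        have hccQ : (c₂ : ℚ) ≤ c₁ := by exact_mod_cast hcc
        have hc21Q : (1 : ℚ) ≤ c₂ := by exact_mod_cast hc21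
        refine ⟨⟨by norm_num, by omega, by norm_num, by omega, ?_⟩, Or.inr ⟨rfl, rfl⟩⟩
        norm_num [QSegPrec, quasiSpehSeg, shiftSeg]
        refine ⟨by linarith, by linarith, by linarith, ⟨n + (c₁ - a₁), ?_⟩⟩
        push_cast
        linarith
  · -- j ≥ 2 : the second segment is generic
    have hj2 : 2 ≤ j := by omega
    simp only [QSegPrec, quasiSpehSeg, if_neg hi1, if_neg hj] at h5
    obtain ⟨h5a, h5b, h5c, n, hn⟩ := h5
    have E3 : b₁ + a₁ - 2*i < b₂ + a₂ - 2*j := by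
      have h : ((b₁ + a₁ - 2*i : ℤ) : ℚ) < ((b₂ + a₂ - 2*j : ℤ) : ℚ) := by
        push_cast; linarith
      exact_mod_cast h
    have E4 : b₂ - a₂ - 2*j - (b₁ - a₁ - 2*i) = 2*n := by
      have h : ((b₂ - a₂ - 2*j - (b₁ - a₁ - 2*i) : ℤ) : ℚ) = ((2*n : ℤ) : ℚ) := by
        push_cast; linarith
      exact_mod_cast h
    by_cases hP : i = j + 1 ∧ c₁ < c₂
    · obtain ⟨hij, hcc⟩ := hP
      have hsum : a₁ + b₁ = a₂ + b₂ := by omega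
      have hb2 : j + 1 ≤ b₂ := by omega
      have hj11 : j + 1 ≠ 1 := by omega
      rw [hq, if_pos ⟨hij, hcc⟩]
      refine ⟨⟨by omega, by omega, by omega, by omega, ?_⟩, Or.inl ⟨rfl, rfl⟩⟩
      norm_num [QSegPrec, quasiSpehSeg, shiftSeg, hi1, hj11]
      refine ⟨by push_cast; linarith, by push_cast; linarith, by push_cast; linarith,
        ⟨n, ?_⟩⟩
      push_cast
      linarith
    · rw [hq, if_neg hP]
      by_cases hi3 : 3 ≤ i
      · have hi11 : i - 1 ≠ 1 := by omega
        refine ⟨⟨by omega, by omega, by omega, by omega, ?_⟩, Or.inr ⟨rfl, rfl⟩⟩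
        norm_num [QSegPrec, quasiSpehSeg, shiftSeg, hi11, hj]
        refine ⟨by push_cast; linarith, by push_cast; linarith, by push_cast; linarith,
          ⟨n, ?_⟩⟩
        push_cast
        linarith
      · exfalso
        omega

/-- For quasi-Speh multisegments `m₁ = m^{a₁,b₁,c₁}` and `m₂ = m^{a₂,b₂,c₂}` with
`(a₂,b₂) ⪯ (a₁,b₁)`, there is an injective matching function `f : X → Y` for the
Lapid–Mínguez bipartite graph. -/
theorem quasiSpeh_matching (a₁ b₁ c₁ a₂ b₂ c₂ : ℤ)
    (ha₁ : 0 < a₁) (hb₁ : 0 < b₁) (hc₁0 : 0 ≤ c₁) (hc₁a : c₁ ≤ a₁)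
    (ha₂ : 0 < a₂) (hb₂ : 0 < b₂) (hc₂0 : 0 ≤ c₂) (hc₂a : c₂ ≤ a₂)
    (hord : a₂ + b₂ < a₁ + b₁ ∨ (a₂ + b₂ = a₁ + b₁ ∧ a₂ ≤ a₁))
    (X Y : Set (ℤ × ℤ))
    (hX : X = {p : ℤ × ℤ | 1 ≤ p.1 ∧ p.1 ≤ b₁ ∧ 1 ≤ p.2 ∧ p.2 ≤ b₂ ∧
      QSegPrec (quasiSpehSeg a₁ b₁ c₁ p.1) (quasiSpehSeg a₂ b₂ c₂ p.2)})
    (hY : Y = {p : ℤ × ℤ | 1 ≤ p.1 ∧ p.1 ≤ b₁ ∧ 1 ≤ p.2 ∧ p.2 ≤ b₂ ∧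
      QSegPrec (quasiSpehSeg a₁ b₁ c₁ p.1) (shiftSeg (quasiSpehSeg a₂ b₂ c₂ p.2))}) :
    ∃ f : X → Y, Function.Injective f ∧ ∀ x : X, LMEdge (x : ℤ × ℤ) ((f x : ℤ × ℤ)) := by
  subst hX hY
  refine ⟨fun x => ⟨if x.1.1 = x.1.2 + 1 ∧ c₁ < c₂ then (x.1.1, x.1.2 + 1) else (x.1.1 - 1, x.1.2),
    (quasiSpeh_key a₁ b₁ c₁ a₂ b₂ c₂ x.1.1 x.1.2 ha₁ hb₁ hc₁0 hc₁a ha₂ hb₂ hc₂0 hc₂a hord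
      x.2.1 x.2.2.1 x.2.2.2.1 x.2.2.2.2.1 x.2.2.2.2.2 _ rfl).1⟩, ?_, ?_⟩
  · intro x y hxy
    have h := congrArg Subtype.val hxy
    simp only at h
    apply Subtype.ext
    rw [Prod.ext_iff]
    by_cases hx : x.1.1 = x.1.2 + 1 ∧ c₁ < c₂ <;> by_cases hy : y.1.1 = y.1.2 + 1 ∧ c₁ < c₂
    · rw [if_pos hx, if_pos hy, Prod.ext_iff] at h
      simp only at h
      omega
    · rw [if_pos hx, if_neg hy, Prod.ext_iff] at h
      simp only at h
      exact absurd ⟨by omega, hx.2⟩ hy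
    · rw [if_neg hx, if_pos hy, Prod.ext_iff] at h
      simp only at h
      exact absurd ⟨by omega, hy.2⟩ hx
    · rw [if_neg hx, if_neg hy, Prod.ext_iff] at h
      simp only at h
      omega
  · intro x
    exact (quasiSpeh_key a₁ b₁ c₁ a₂ b₂ c₂ x.1.1 x.1.2 ha₁ hb₁ hc₁0 hc₁a ha₂ hb₂ hc₂0 hc₂a hord
      x.2.1 x.2.2.1 x.2.2.2.1 x.2.2.2.2.1 x.2.2.2.2.2 _ rfl).2
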